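/- Let λ be a strict partition of n. The principal specialization Q_λ(1^t) — the value of Schur's Q-function Q_λ at x_1 = ⋯ = x_t = 1 and all other variables 0 — is, as a function of t, a polynomial in t with rational coefficients, and this polynomial is divisible by t^{srank(λ)} in ℚ[t], where srank(λ) = max(o, e + (ℓ(λ) mod 2)) with o and e the numbers of odd and even parts of λ. -/

import Mathlib

open scoped Classical

/-- A strict partition of `n`: a strictly decreasing list of positive integers summing to `n`. -/
def IsStrictPartition (n : ℕ) (l : List ℕ) : Prop :=
  l.Pairwise (· > ·) ∧ (∀ x ∈ l, 0 < x) ∧ l.sum = n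

/-- The `i`-th part of `l` (1-indexed); parts beyond the length are `0`. -/
def partAt (l : List ℕ) (i : ℕ) : ℕ := l.getD (i - 1) 0

/-- The monomial symmetric function `m_μ`, as a formal power series in the variables
`x_0, x_1, x_2, …`: the coefficient of a monomial is `1` exactly when the multiset of its
nonzero exponents is `μ`. -/
noncomputable def mSym (μ : Multiset ℕ) : MvPowerSeries ℕ ℚ :=
  fun d => if d.support.val.map d = μ then 1 else 0

/-- The power sum symmetric function `p_k = Σ_i x_i^k`. -/
noncomputable def pFun (k : ℕ) : MvPowerSeries ℕ ℚ :=
  fun d => if ∃ i : ℕ, d = Finsupp.single i k then 1 else 0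

/-- `q_k = Σ_{μ ⊢ k} 2^{ℓ(μ)} m_μ`. -/
noncomputable def qFun (k : ℕ) : MvPowerSeries ℕ ℚ :=
  ∑ μ : Nat.Partition k,
    (MvPowerSeries.C : ℚ →+* MvPowerSeries ℕ ℚ) ((2 : ℚ) ^ (Multiset.card μ.parts)) * mSym μ.parts

/-- `p_π = p_{π_1} p_{π_2} ⋯` for a partition `π` of `n`. -/
noncomputable def pProd {n : ℕ} (π : Nat.Partition n) : MvPowerSeries ℕ ℚ :=
  (π.parts.map pFun).prod

namespace SPAux
open MvPowerSeries Finset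

/-- the multiset of nonzero values of `d` -/
def D (d : ℕ →₀ ℕ) : Multiset ℕ := d.support.val.map d

lemma D_card (d : ℕ →₀ ℕ) : Multiset.card (D d) = d.support.card := by
  simp [D]

lemma D_pos (d : ℕ →₀ ℕ) : ∀ x ∈ D d, 0 < x := by
  intro x hx
  simp only [D, Multiset.mem_map] at hx
  obtain ⟨i, hi, rfl⟩ := hx
  have : i ∈ d.support := hi
  have := Finsupp.mem_support_iff.mp this
  omega

lemma D_sum (d : ℕ →₀ ℕ) : (D d).sum = d.sum fun _ e => e := rfl

lemma coeff_qFun (k : ℕ) (d : ℕ →₀ ℕ) :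
    coeff d (qFun k) = if (D d).sum = k then 2 ^ d.support.card else 0 := by
  have hm : ∀ μ : Multiset ℕ, coeff d (mSym μ) = if D d = μ then 1 else 0 := fun μ => rfl
  rw [qFun, map_sum]
  by_cases h : (D d).sum = k
  · rw [if_pos h]
    have hμ0 : (⟨D d, fun {x} hx => D_pos d x hx, h⟩ : Nat.Partition k) ∈ Finset.univ := Finset.mem_univ _
    rw [Finset.sum_eq_single (⟨D d, fun {x} hx => D_pos d x hx, h⟩ : Nat.Partition k)]
    · rw [coeff_C_mul, hm, if_pos rfl, mul_one, D_card]
    · intro μ _ hne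
      rw [coeff_C_mul, hm, if_neg, mul_zero]
      intro hEq
      apply hne
      exact Nat.Partition.ext hEq.symm
    · intro h'; exact absurd hμ0 h'
  · rw [if_neg h]
    refine Finset.sum_eq_zero fun μ _ => ?_
    rw [coeff_C_mul, hm, if_neg, mul_zero]
    intro hEq
    exact h (by rw [hEq]; exact μ.parts_sum)

end SPAux

namespace SPAux
open MvPowerSeries Finset

noncomputable def PP (S : Multiset ℕ) : MvPowerSeries ℕ ℚ := (S.map pFun).prod

lemma PP_zero : PP 0 = 1 := by simp [PP]

lemma PP_cons (k : ℕ) (S : Multiset ℕ) : PP (k ::ₘ S) = pFun k * PP S := by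
  simp [PP]

lemma PP_add (S T : Multiset ℕ) : PP (S + T) = PP S * PP T := by
  simp [PP, Multiset.prod_add]

lemma pProd_eq {n : ℕ} (π : Nat.Partition n) : pProd π = PP π.parts := rfl

lemma coeff_pFun (k : ℕ) (d : ℕ →₀ ℕ) :
    coeff d (pFun k) = if ∃ i : ℕ, d = Finsupp.single i k then 1 else 0 := rfl

lemma PP_coeff_nonneg (S : Multiset ℕ) (d : ℕ →₀ ℕ) : 0 ≤ coeff d (PP S) := by
  induction S using Multiset.induction_on generalizing d with
  | empty =>
    rw [PP_zero, coeff_one]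
    split <;> norm_num
  | cons k S ih =>
    rw [PP_cons]
    classical
    rw [coeff_mul]
    refine Finset.sum_nonneg fun p _ => mul_nonneg ?_ (ih p.2)
    rw [coeff_pFun]
    split <;> norm_num

/-- total degree of a monomial -/
def tot (d : ℕ →₀ ℕ) : ℕ := d.sum fun _ e => e

lemma D_sum' (d : ℕ →₀ ℕ) : (D d).sum = tot d := rfl

lemma support_single_add (i k : ℕ) (f : ℕ →₀ ℕ) (hk : 0 < k) :
    (Finsupp.single i k + f).support = insert i f.support := by
  ext x
  rcases eq_or_ne x i with rfl | hxi
  · have : k ≠ 0 := by omega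
    simp [Finsupp.single_apply, this]
  · simp [Finsupp.single_apply, Ne.symm hxi, hxi]

lemma tot_single_add (i k : ℕ) (f : ℕ →₀ ℕ) :
    tot (Finsupp.single i k + f) = k + tot f := by
  unfold tot
  rw [Finsupp.sum_add_index (by simp) (by simp)]
  simp

lemma D_single_add (i k : ℕ) (f : ℕ →₀ ℕ) (hk : 0 < k) (hi : i ∉ f.support) :
    D (Finsupp.single i k + f) = k ::ₘ D f := by
  rw [D, support_single_add i k f hk, Finset.insert_val,
    Multiset.ndinsert_of_notMem (by simpa using hi), Multiset.map_cons]
  congr 1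
  · simp [Finsupp.notMem_support_iff.mp hi]
  · rw [D]
    apply Multiset.map_congr rfl
    intro x hx
    have hxi : x ≠ i := by rintro rfl; exact hi hx
    simp [Finsupp.single_apply, Ne.symm hxi]

/-- triangularity -/
lemma PP_coeff_ne (S : Multiset ℕ) (hS : ∀ x ∈ S, 0 < x) (d : ℕ →₀ ℕ)
    (h : coeff d (PP S) ≠ 0) :
    tot d = S.sum ∧ d.support.card ≤ Multiset.card S ∧
      (d.support.card = Multiset.card S → D d = S) := by
  classical
  induction S using Multiset.induction_on generalizing d with
  | empty =>
    rw [PP_zero, coeff_one] at h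
    have hd : d = 0 := by by_contra hne; rw [if_neg hne] at h; exact h rfl
    subst hd
    simp [D, tot]
  | cons k S ih =>
    rw [PP_cons, coeff_mul] at h
    obtain ⟨p, hp, hne⟩ := Finset.exists_ne_zero_of_sum_ne_zero h
    rw [Finset.HasAntidiagonal.mem_antidiagonal] at hp
    rw [coeff_pFun] at hne
    have hex : ∃ i : ℕ, p.1 = Finsupp.single i k := by
      by_contra hno; rw [if_neg hno, zero_mul] at hne; exact hne rfl
    obtain ⟨i, hi⟩ := hex
    have h2 : coeff p.2 (PP S) ≠ 0 := by
      intro h0; rw [h0, mul_zero] at hne; exact hne rfl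
    have hk : 0 < k := hS k (Multiset.mem_cons_self _ _)
    have hSpos : ∀ x ∈ S, 0 < x := fun x hx => hS x (Multiset.mem_cons_of_mem hx)
    obtain ⟨hsum, hcard, heq⟩ := ih hSpos p.2 h2
    have hd : d = Finsupp.single i k + p.2 := by rw [← hi, hp]
    subst hd
    have hsupp := support_single_add i k p.2 hk
    refine ⟨?_, ?_, ?_⟩
    · rw [tot_single_add, hsum, Multiset.sum_cons]
    · rw [hsupp, Multiset.card_cons]
      calc (insert i p.2.support).card ≤ p.2.support.card + 1 := Finset.card_insert_le _ _
        _ ≤ Multiset.card S + 1 := by omega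
    · intro hc
      rw [hsupp, Multiset.card_cons] at hc
      have hnotmem : i ∉ p.2.support := by
        intro hmem
        rw [Finset.insert_eq_self.mpr hmem] at hc
        omega
      rw [Finset.card_insert_of_notMem hnotmem] at hc
      rw [D_single_add i k p.2 hk hnotmem, heq (by omega)]

/-- existence of a maximal-support witness monomial -/
lemma PP_witness (S : Multiset ℕ) (hS : ∀ x ∈ S, 0 < x) :
    ∃ d : ℕ →₀ ℕ, 0 < coeff d (PP S) ∧ D d = S := by
  classical
  induction S using Multiset.induction_on with
  | empty =>
    exact ⟨0, by rw [PP_zero, coeff_one]; simp, by simp [D]⟩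
  | cons k S ih =>
    have hk : 0 < k := hS k (Multiset.mem_cons_self _ _)
    obtain ⟨d, hd, hD⟩ := ih (fun x hx => hS x (Multiset.mem_cons_of_mem hx))
    obtain ⟨i, hi⟩ : ∃ i : ℕ, i ∉ d.support := Infinite.exists_notMem_finset _
    refine ⟨Finsupp.single i k + d, ?_, ?_⟩
    · rw [PP_cons, coeff_mul]
      refine Finset.sum_pos' (fun p _ => mul_nonneg
        (by rw [coeff_pFun]; split <;> norm_num) (PP_coeff_nonneg S p.2)) ?_
      refine ⟨(Finsupp.single i k, d), Finset.HasAntidiagonal.mem_antidiagonal.mpr rfl, ?_⟩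
      rw [coeff_pFun, if_pos ⟨i, rfl⟩, one_mul]
      exact hd
    · rw [D_single_add i k d hk hi, hD]

end SPAux

namespace SPAux
open MvPowerSeries Finset

lemma indep {n : ℕ} (c : Nat.Partition n → ℚ)
    (h : ∑ π : Nat.Partition n, (MvPowerSeries.C : ℚ →+* MvPowerSeries ℕ ℚ) (c π) * pProd π = 0) :
    ∀ π, c π = 0 := by
  classical
  by_contra hne
  push_neg at hne
  obtain ⟨π1, hπ1⟩ := hne
  set T : Finset (Nat.Partition n) := Finset.univ.filter (fun π => c π ≠ 0) with hT
  have hTn : T.Nonempty := ⟨π1, by simp [hT, hπ1]⟩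
  obtain ⟨π0, hπ0T, hmax⟩ := Finset.exists_max_image T (fun π => Multiset.card π.parts) hTn
  have hc0 : c π0 ≠ 0 := (Finset.mem_filter.mp hπ0T).2
  obtain ⟨d0, hd0pos, hd0D⟩ := PP_witness π0.parts (fun x hx => π0.parts_pos hx)
  have hcard0 : d0.support.card = Multiset.card π0.parts := by
    rw [← hd0D, D_card]
  have := congrArg (coeff d0) h
  rw [map_sum, map_zero] at this
  rw [Finset.sum_eq_single π0] at this
  · rw [coeff_C_mul, pProd_eq] at this
    exact hc0 (by
      have := mul_eq_zero.mp this
      rcases this with h' | h'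
      · exact h'
      · exact absurd h' (ne_of_gt hd0pos))
  · intro π _ hπne
    rw [coeff_C_mul, pProd_eq]
    by_cases hcπ : c π = 0
    · rw [hcπ, zero_mul]
    · by_cases hco : coeff d0 (PP π.parts) = 0
      · rw [hco, mul_zero]
      · exfalso
        obtain ⟨_, hle, heq⟩ := PP_coeff_ne π.parts (fun x hx => π.parts_pos hx) d0 hco
        have h1 : Multiset.card π.parts ≤ Multiset.card π0.parts :=
          hmax π (Finset.mem_filter.mpr ⟨Finset.mem_univ _, hcπ⟩)
        have h2 : d0.support.card = Multiset.card π.parts := by omega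
        have : π = π0 := Nat.Partition.ext (by rw [← heq h2, hd0D])
        exact hπne this
  · intro h'; exact absurd (Finset.mem_univ π0) h'

end SPAux

namespace SPAux
open MvPowerSeries Finset

lemma tot_eq_sum (d : ℕ →₀ ℕ) : tot d = ∑ x ∈ d.support, d x := rfl

lemma le_tot (d : ℕ →₀ ℕ) (i : ℕ) (hi : i ∈ d.support) : d i ≤ tot d := by
  rw [tot_eq_sum]
  exact Finset.single_le_sum (fun x _ => Nat.zero_le _) hi

lemma single_add_sub (d : ℕ →₀ ℕ) (i j : ℕ) (hij : j ≤ d i) :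
    Finsupp.single i j + (d - Finsupp.single i j) = d := by
  ext x
  rcases eq_or_ne x i with rfl | hxi
  · simp [Finsupp.single_apply]
    omega
  · simp [Finsupp.single_apply, Ne.symm hxi]

lemma tot_sub_single (d : ℕ →₀ ℕ) (i j : ℕ) (hij : j ≤ d i) :
    tot (d - Finsupp.single i j) = tot d - j := by
  have h := congrArg tot (single_add_sub d i j hij)
  rw [tot_single_add] at h
  omega

lemma support_sub_single (d : ℕ →₀ ℕ) (i j : ℕ) (hj : 0 < j) (hij : j ≤ d i) :
    (d - Finsupp.single i j).support
      = if j = d i then d.support.erase i else d.support := by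
  ext x
  rcases eq_or_ne x i with rfl | hxi
  · have hval : (d - Finsupp.single x j) x = d x - j := by
      rw [Finsupp.tsub_apply, Finsupp.single_eq_same]
    by_cases h : j = d x
    · rw [if_pos h]
      simp [Finsupp.mem_support_iff, hval, h]
    · rw [if_neg h]
      simp only [Finsupp.mem_support_iff, hval]
      constructor
      · intro _; omega
      · intro hx; omega
  · have hval : (d - Finsupp.single i j) x = d x := by
      rw [Finsupp.tsub_apply, Finsupp.single_eq_of_ne' (Ne.symm hxi), Nat.sub_zero]
    split <;> simp [Finsupp.mem_support_iff, hval, Finset.mem_erase, hxi]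

lemma card_support_sub_single (d : ℕ →₀ ℕ) (i j : ℕ) (hj : 0 < j) (hij : j ≤ d i) :
    (d - Finsupp.single i j).support.card
      = if j = d i then d.support.card - 1 else d.support.card := by
  rw [support_sub_single d i j hj hij]
  by_cases h : j = d i
  · rw [if_pos h, if_pos h, Finset.card_erase_of_mem]
    rw [Finsupp.mem_support_iff]
    omega
  · rw [if_neg h, if_neg h]

lemma coeff_pFun_mul (j : ℕ) (hj : 0 < j) (F : MvPowerSeries ℕ ℚ) (d : ℕ →₀ ℕ) :
    coeff d (pFun j * F) =
      ∑ i ∈ d.support.filter (fun i => j ≤ d i), coeff (d - Finsupp.single i j) F := by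
  classical
  rw [coeff_mul]
  rw [← Finset.sum_filter_of_ne
    (p := fun p : (ℕ →₀ ℕ) × (ℕ →₀ ℕ) => ∃ i, p.1 = Finsupp.single i j)
    (by
      intro p _ hfne
      by_contra hno
      rw [coeff_pFun, if_neg hno, zero_mul] at hfne
      exact hfne rfl)]
  refine (Finset.sum_bij
    (fun i _ => ((Finsupp.single i j : ℕ →₀ ℕ), d - Finsupp.single i j)) ?_ ?_ ?_ ?_).symm
  · intro i hi
    rw [Finset.mem_filter] at hi ⊢
    exact ⟨Finset.HasAntidiagonal.mem_antidiagonal.mpr (single_add_sub d i j hi.2), ⟨i, rfl⟩⟩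
  · intro a ha b hb hab
    exact Finsupp.single_left_injective (by omega) (congrArg Prod.fst hab)
  · intro p hp
    rw [Finset.mem_filter, Finset.HasAntidiagonal.mem_antidiagonal] at hp
    obtain ⟨hpd, i, hi⟩ := hp
    have hdi : d i = j + p.2 i := by
      have := congrArg (fun f : ℕ →₀ ℕ => f i) hpd
      simpa [hi, Finsupp.add_apply, Finsupp.single_eq_same] using this.symm
    refine ⟨i, Finset.mem_filter.mpr ⟨Finsupp.mem_support_iff.mpr (by omega), by omega⟩, ?_⟩
    have hp2 : d - Finsupp.single i j = p.2 := by
      ext x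
      have := congrArg (fun f : ℕ →₀ ℕ => f x) hpd
      simp only [Finsupp.add_apply, hi] at this
      rw [Finsupp.tsub_apply]
      rcases eq_or_ne x i with rfl | hxi
      · rw [Finsupp.single_eq_same]; omega
      · rw [Finsupp.single_eq_of_ne' (Ne.symm hxi)]
        rw [Finsupp.single_eq_of_ne' (Ne.symm hxi)] at this
        omega
    exact Prod.ext hi.symm hp2
  · intro i hi
    rw [coeff_pFun, if_pos ⟨i, rfl⟩, one_mul]

lemma cardodd (m : ℕ) :
    2 * ((Finset.Icc 1 m).filter (fun j => Odd j)).card = m + (if Odd m then 1 else 0) := by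
  induction m with
  | zero => simp
  | succ m ih =>
    rw [← Finset.insert_Icc_right_eq_Icc_add_one (by omega), Finset.filter_insert]
    have hmem : m + 1 ∉ (Finset.Icc 1 m).filter (fun j => Odd j) := by simp
    by_cases h : Odd m
    · have h1 : ¬ Odd (m + 1) := by simp [Nat.odd_add_one, h]
      rw [if_neg h1, if_neg h1, if_pos h] at *
      omega
    · have h1 : Odd (m + 1) := by simp [Nat.odd_add_one, h]
      rw [if_pos h1, if_pos h1, Finset.card_insert_of_notMem hmem, if_neg h] at *
      omega

end SPAux

namespace SPAux
open MvPowerSeries Finset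

lemma keysum (m s : ℕ) (hm : 0 < m) (hs : 0 < s) :
    (2:ℚ) * ∑ j ∈ (Finset.Icc 1 m).filter (fun j => Odd j),
        (if j = m then (2:ℚ)^(s-1) else 2^s) = (m : ℚ) * 2^s := by
  have hsplit : ∀ j, (if j = m then (2:ℚ)^(s-1) else 2^s)
      = 2^s + (if j = m then (2:ℚ)^(s-1) - 2^s else 0) := by intro j; split <;> ring
  rw [Finset.sum_congr rfl (fun j _ => hsplit j), Finset.sum_add_distrib,
    Finset.sum_const, Finset.sum_ite_eq' _ m (fun _ => (2:ℚ)^(s-1) - 2^s)]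
  have hmm : m ∈ (Finset.Icc 1 m).filter (fun j => Odd j) ↔ Odd m := by
    simp only [Finset.mem_filter, Finset.mem_Icc]
    exact ⟨fun h => h.2, fun h => ⟨⟨hm, le_refl m⟩, h⟩⟩
  have hN := cardodd m
  have hy : (2:ℚ)^s = 2 * 2^(s-1) := by
    rw [← pow_succ']
    congr 1
    omega
  by_cases h : Odd m
  · rw [if_pos (hmm.mpr h)]
    rw [if_pos h] at hN
    have hN' : 2 * (((Finset.Icc 1 m).filter (fun j => Odd j)).card : ℚ) = m + 1 := by
      exact_mod_cast congrArg (Nat.cast : ℕ → ℚ) hN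
    rw [hy, nsmul_eq_mul]
    linear_combination (2 * (2:ℚ)^(s-1)) * hN'
  · rw [if_neg (fun hc => h (hmm.mp hc))]
    rw [if_neg h] at hN
    have hN' : 2 * (((Finset.Icc 1 m).filter (fun j => Odd j)).card : ℚ) = m := by
      exact_mod_cast congrArg (Nat.cast : ℕ → ℚ) hN
    rw [hy, nsmul_eq_mul]
    linear_combination (2 * (2:ℚ)^(s-1)) * hN'

lemma newton (k : ℕ) (hk : 0 < k) :
    (k : ℚ) • qFun k
      = (2:ℚ) • ∑ j ∈ (Finset.Icc 1 k).filter (fun j => Odd j), pFun j * qFun (k - j) := by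
  apply MvPowerSeries.ext; intro d
  rw [LinearMap.map_smul, LinearMap.map_smul, map_sum, coeff_qFun, D_sum']
  by_cases hd : tot d = k
  · rw [if_pos hd]
    have hs : 0 < d.support.card := by
      rcases Finset.eq_empty_or_nonempty d.support with he | hne
      · exfalso
        have : tot d = 0 := by rw [tot_eq_sum, he]; simp
        omega
      · exact Finset.card_pos.mpr hne
    have hterm : ∀ j ∈ (Finset.Icc 1 k).filter (fun j => Odd j),
        coeff d (pFun j * qFun (k - j)) =
          ∑ i ∈ d.support.filter (fun i => j ≤ d i),
            (if j = d i then (2:ℚ)^(d.support.card - 1) else 2^d.support.card) := by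
      intro j hj
      obtain ⟨hj1, hjo⟩ := Finset.mem_filter.mp hj
      rw [Finset.mem_Icc] at hj1
      rw [coeff_pFun_mul j (by omega)]
      refine Finset.sum_congr rfl fun i hi => ?_
      obtain ⟨hisupp, hji⟩ := Finset.mem_filter.mp hi
      rw [coeff_qFun, D_sum', tot_sub_single d i j hji, if_pos (by omega),
        card_support_sub_single d i j (by omega) hji]
      split <;> rfl
    rw [Finset.sum_congr rfl hterm]
    rw [Finset.sum_comm' (t' := d.support)
      (s' := fun i => (Finset.Icc 1 (d i)).filter (fun j => Odd j)) ?_]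
    · rw [smul_eq_mul, smul_eq_mul, Finset.mul_sum]
      have hinner : ∀ i ∈ d.support,
          (2:ℚ) * ∑ j ∈ (Finset.Icc 1 (d i)).filter (fun j => Odd j),
              (if j = d i then (2:ℚ)^(d.support.card - 1) else 2^d.support.card)
            = (d i : ℚ) * 2^d.support.card := by
        intro i hi
        exact keysum (d i) d.support.card (by simpa [Nat.pos_iff_ne_zero] using Finsupp.mem_support_iff.mp hi) hs
      rw [Finset.sum_congr rfl hinner, ← Finset.sum_mul, ← Nat.cast_sum, ← tot_eq_sum, hd]
    · intro j i
      simp only [Finset.mem_filter, Finset.mem_Icc]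
      constructor
      · rintro ⟨⟨⟨h1, h2⟩, h3⟩, h4, h5⟩
        exact ⟨⟨⟨h1, h5⟩, h3⟩, h4⟩
      · rintro ⟨⟨⟨h1, h5⟩, h3⟩, h4⟩
        have : d i ≤ tot d := le_tot d i h4
        exact ⟨⟨⟨h1, by omega⟩, h3⟩, h4, h5⟩
  · rw [if_neg hd, smul_zero]
    symm
    rw [smul_eq_mul, mul_eq_zero]
    right
    refine Finset.sum_eq_zero fun j hj => ?_
    obtain ⟨hj1, hjo⟩ := Finset.mem_filter.mp hj
    rw [Finset.mem_Icc] at hj1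
    rw [coeff_pFun_mul j (by omega)]
    refine Finset.sum_eq_zero fun i hi => ?_
    obtain ⟨hisupp, hji⟩ := Finset.mem_filter.mp hi
    rw [coeff_qFun, D_sum', tot_sub_single d i j hji, if_neg ?_]
    have h1 : d i ≤ tot d := le_tot d i hisupp
    omega

end SPAux

namespace SPAux
open MvPowerSeries Finset

/-- span of products of odd power sums of total degree `k` -/
noncomputable def OddM (k : ℕ) : Submodule ℚ (MvPowerSeries ℕ ℚ) :=
  Submodule.span ℚ {F | ∃ S : Multiset ℕ, S.sum = k ∧ (∀ x ∈ S, Odd x) ∧ F = PP S}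

/-- span of products of power sums of total degree `n` with at least `r` factors -/
noncomputable def M (n r : ℕ) : Submodule ℚ (MvPowerSeries ℕ ℚ) :=
  Submodule.span ℚ
    {F | ∃ S : Multiset ℕ, S.sum = n ∧ (∀ x ∈ S, 0 < x) ∧ r ≤ Multiset.card S ∧ F = PP S}

lemma qFun_zero : qFun 0 = 1 := by
  apply MvPowerSeries.ext; intro d
  rw [coeff_qFun, coeff_one]
  by_cases hd : d = 0
  · subst hd
    rw [if_pos (by simp [D]), if_pos rfl]
    simp
  · rw [if_neg ?_, if_neg hd]
    rw [D_sum']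
    intro h0
    apply hd
    ext x
    by_contra hx
    have hxs : x ∈ d.support := Finsupp.mem_support_iff.mpr (by simpa using hx)
    have := le_tot d x hxs
    simp only [Finsupp.coe_zero, Pi.zero_apply] at hx
    omega

lemma pFun_mul_OddM (j k : ℕ) (hj : Odd j) {F : MvPowerSeries ℕ ℚ} (hF : F ∈ OddM k) :
    pFun j * F ∈ OddM (j + k) := by
  induction hF using Submodule.span_induction with
  | mem x hx =>
    obtain ⟨S, hsum, hodd, rfl⟩ := hx
    rw [← PP_cons]
    apply Submodule.subset_span
    refine ⟨j ::ₘ S, by rw [Multiset.sum_cons, hsum], ?_, rfl⟩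
    intro x hx
    rcases Multiset.mem_cons.mp hx with rfl | hxS
    · exact hj
    · exact hodd x hxS
  | zero => rw [mul_zero]; exact Submodule.zero_mem _
  | add x y hx hy ihx ihy => rw [mul_add]; exact Submodule.add_mem _ ihx ihy
  | smul a x hx ih => rw [mul_smul_comm]; exact Submodule.smul_mem _ _ ih

lemma qFun_mem_OddM (k : ℕ) : qFun k ∈ OddM k := by
  induction k using Nat.strong_induction_on with
  | _ k ih =>
    rcases Nat.eq_zero_or_pos k with rfl | hk
    · rw [qFun_zero, ← PP_zero]
      exact Submodule.subset_span ⟨0, rfl, by simp, rfl⟩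
    · have hnewton := newton k hk
      have hkQ : (k : ℚ) ≠ 0 := Nat.cast_ne_zero.mpr (by omega)
      have hq : qFun k = (k : ℚ)⁻¹ • ((2:ℚ) •
          ∑ j ∈ (Finset.Icc 1 k).filter (fun j => Odd j), pFun j * qFun (k - j)) := by
        rw [← hnewton, smul_smul, inv_mul_cancel₀ hkQ, one_smul]
      rw [hq]
      refine Submodule.smul_mem _ _ (Submodule.smul_mem _ _ (Submodule.sum_mem _ ?_))
      intro j hjmem
      obtain ⟨hj1, hjo⟩ := Finset.mem_filter.mp hjmem
      rw [Finset.mem_Icc] at hj1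
      have := pFun_mul_OddM j (k - j) hjo (ih (k - j) (by omega))
      rwa [Nat.add_sub_cancel' hj1.2] at this

lemma odd_multiset_card (S : Multiset ℕ) (h : ∀ x ∈ S, Odd x) :
    S.sum % 2 = Multiset.card S % 2 := by
  induction S using Multiset.induction_on with
  | empty => simp
  | cons a S ih =>
    have ha : Odd a := h a (Multiset.mem_cons_self _ _)
    have hS := ih (fun x hx => h x (Multiset.mem_cons_of_mem hx))
    rw [Multiset.sum_cons, Multiset.card_cons]
    obtain ⟨m, rfl⟩ := ha
    omega

/-- `eps k` : minimal number of power-sum factors forced in degree `k` -/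
def eps (k : ℕ) : ℕ := if k = 0 then 0 else if Odd k then 1 else 2

lemma OddM_le_M (k : ℕ) : OddM k ≤ M k (eps k) := by
  apply Submodule.span_le.mpr
  rintro F ⟨S, hsum, hodd, rfl⟩
  apply Submodule.subset_span
  refine ⟨S, hsum, fun x hx => (hodd x hx).pos, ?_, rfl⟩
  have hpar := odd_multiset_card S hodd
  rw [hsum] at hpar
  unfold eps
  split
  · omega
  · have hcard : Multiset.card S ≠ 0 := by
      intro h0
      rw [Multiset.card_eq_zero.mp h0] at hsum
      simp at hsum
      omega
    split
    · omega
    · have : k % 2 = 0 := Nat.even_iff.mp (Nat.not_odd_iff_even.mp ‹¬Odd k›)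
      omega

lemma qFun_mem_M (k : ℕ) : qFun k ∈ M k (eps k) := OddM_le_M k (qFun_mem_OddM k)

lemma M_mono (n : ℕ) {r r' : ℕ} (h : r' ≤ r) : M n r ≤ M n r' := by
  apply Submodule.span_le.mpr
  rintro F ⟨S, hsum, hpos, hcard, rfl⟩
  exact Submodule.subset_span ⟨S, hsum, hpos, le_trans h hcard, rfl⟩

lemma M_mul {a b r s : ℕ} {F G : MvPowerSeries ℕ ℚ} (hF : F ∈ M a r) (hG : G ∈ M b s) :
    F * G ∈ M (a + b) (r + s) := by
  induction hF using Submodule.span_induction with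
  | mem x hx =>
    obtain ⟨S, hsum, hpos, hcard, rfl⟩ := hx
    induction hG using Submodule.span_induction with
    | mem y hy =>
      obtain ⟨T, hsumT, hposT, hcardT, rfl⟩ := hy
      rw [← PP_add]
      apply Submodule.subset_span
      refine ⟨S + T, by rw [Multiset.sum_add, hsum, hsumT], ?_, ?_, rfl⟩
      · intro x hx
        rcases Multiset.mem_add.mp hx with h | h
        · exact hpos x h
        · exact hposT x h
      · rw [Multiset.card_add]
        omega
    | zero => rw [mul_zero]; exact Submodule.zero_mem _
    | add x y hx hy ihx ihy => rw [mul_add]; exact Submodule.add_mem _ ihx ihy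
    | smul c x hx ih => rw [mul_smul_comm]; exact Submodule.smul_mem _ _ ih
  | zero => rw [zero_mul]; exact Submodule.zero_mem _
  | add x y hx hy ihx ihy => rw [add_mul]; exact Submodule.add_mem _ ihx ihy
  | smul c x hx ih => rw [smul_mul_assoc]; exact Submodule.smul_mem _ _ ih

lemma C_mul_mem {n r : ℕ} (c : ℚ) {F : MvPowerSeries ℕ ℚ} (hF : F ∈ M n r) :
    (MvPowerSeries.C : ℚ →+* MvPowerSeries ℕ ℚ) c * F ∈ M n r := by
  rw [← smul_eq_C_mul]
  exact Submodule.smul_mem _ _ hF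

lemma two_mul_M {n r : ℕ} {F : MvPowerSeries ℕ ℚ} (hF : F ∈ M n r) :
    (2 : MvPowerSeries ℕ ℚ) * F ∈ M n r := by
  have : (2 : MvPowerSeries ℕ ℚ) = (MvPowerSeries.C : ℚ →+* MvPowerSeries ℕ ℚ) 2 := by
    rw [map_ofNat]
  rw [this]
  exact C_mul_mem 2 hF

end SPAux

namespace SPAux
open MvPowerSeries Finset

lemma sum_eraseIdx : ∀ (l : List ℕ) (m : ℕ), m < l.length →
    (l.eraseIdx m).sum + l.getD m 0 = l.sum
  | a :: t, 0, _ => by simp [List.eraseIdx]; omega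
  | a :: t, m+1, h => by
    have ih := sum_eraseIdx t m (by simpa using h)
    simp only [List.eraseIdx_cons_succ, List.sum_cons, List.getD_cons_succ]
    omega

lemma countP_eraseIdx' (P : ℕ → Prop) [DecidablePred P] :
    ∀ (l : List ℕ) (m : ℕ), m < l.length →
      (l.eraseIdx m).countP (fun x => decide (P x)) + (if P (l.getD m 0) then 1 else 0)
        = l.countP (fun x => decide (P x))
  | a :: t, 0, _ => by
    simp only [List.eraseIdx, List.getD_cons_zero, List.countP_cons]
    simp
  | a :: t, m+1, h => by
    have ih := countP_eraseIdx' P t m (by simpa using h)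
    simp only [List.eraseIdx_cons_succ, List.countP_cons, List.getD_cons_succ]
    simp only [decide_eq_true_eq]
    omega

lemma countP_cons' (P : ℕ → Prop) [DecidablePred P] (a : ℕ) (t : List ℕ) :
    (a :: t).countP (fun x => decide (P x))
      = t.countP (fun x => decide (P x)) + (if P a then 1 else 0) := by
  rw [List.countP_cons]; simp

lemma eps_odd {x : ℕ} (h : Odd x) : eps x = 1 := by
  unfold eps
  rw [if_neg (by rcases h with ⟨u, rfl⟩; omega), if_pos h]

lemma eps_even {x : ℕ} (h : Even x) (hx : 0 < x) : eps x = 2 := by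
  unfold eps
  rw [if_neg (by omega), if_neg (by simpa [Nat.not_odd_iff_even] using h)]

lemma eps_pair (x y : ℕ) (hx : 0 < x) :
    (if Odd (x + y) then 1 else 2) ≤ eps x + eps y := by
  rcases Nat.even_or_odd x with hex | hox
  · rw [eps_even hex hx]
    have h2 : (if Odd (x + y) then 1 else 2) ≤ 2 := by split <;> omega
    omega
  · rw [eps_odd hox]
    rcases Nat.even_or_odd y with hey | hoy
    · have h1 : Odd (x + y) := by
        rw [Nat.odd_iff] at hox ⊢
        have := Nat.even_iff.mp hey
        omega
      rw [if_pos h1]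
      omega
    · have h1 : ¬ Odd (x + y) := by
        rw [Nat.odd_iff] at hox ⊢
        have := Nat.odd_iff.mp hoy
        omega
      rw [if_neg h1, eps_odd hoy]

lemma Qpair (Q : List ℕ → MvPowerSeries ℕ ℚ)
    (hQ2 : ∀ a b : ℕ, 0 < b → b < a →
      Q [a, b] = qFun a * qFun b +
        2 * ∑ m ∈ Finset.Icc 1 b,
          (MvPowerSeries.C : ℚ →+* MvPowerSeries ℕ ℚ) ((-1 : ℚ) ^ m) * (qFun (a + m) * qFun (b - m)))
    (a b : ℕ) (hb : 0 < b) (hab : b < a) :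
    Q [a, b] ∈ M (a + b) (if Odd (a + b) then 1 else 2) := by
  rw [hQ2 a b hb hab]
  apply Submodule.add_mem
  · have h1 : qFun a * qFun b ∈ M (a + b) (eps a + eps b) :=
      M_mul (qFun_mem_M a) (qFun_mem_M b)
    exact M_mono _ (eps_pair a b (by omega)) h1
  · apply two_mul_M
    apply Submodule.sum_mem
    intro m hm
    rw [Finset.mem_Icc] at hm
    apply C_mul_mem
    have h1 : qFun (a + m) * qFun (b - m) ∈ M ((a + m) + (b - m)) (eps (a + m) + eps (b - m)) :=
      M_mul (qFun_mem_M _) (qFun_mem_M _)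
    have hidx : (a + m) + (b - m) = a + b := by omega
    rw [hidx] at h1
    have h2 := eps_pair (a + m) (b - m) (by omega)
    rw [hidx] at h2
    exact M_mono _ h2 h1

/-- the shifted rank, in the form appearing in the theorem -/
def srank (l : List ℕ) : ℕ :=
  max (l.countP (fun x => decide (Odd x)))
    (l.countP (fun x => decide (Even x)) + l.length % 2)

lemma srank_singleton_le (a : ℕ) (ha : 0 < a) : srank [a] ≤ eps a := by
  unfold srank
  rw [countP_cons' Odd, countP_cons' Even]
  simp only [List.countP_nil, List.length_cons, List.length_nil]
  rcases Nat.even_or_odd a with hea | hoa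
  · rw [eps_even hea ha, if_pos hea, if_neg (by simpa [Nat.not_odd_iff_even] using hea)]
    omega
  · rw [eps_odd hoa, if_pos hoa, if_neg (by simpa [Nat.not_even_iff_odd] using hoa)]
    omega

lemma srank_pair_le (a b : ℕ) : srank [a, b] ≤ if Odd (a + b) then 1 else 2 := by
  unfold srank
  rw [countP_cons' Odd, countP_cons' Odd, countP_cons' Even, countP_cons' Even]
  simp only [List.countP_nil, List.length_cons, List.length_nil]
  rcases Nat.even_or_odd a with ha | ha <;> rcases Nat.even_or_odd b with hb | hb
  · have hoa : ¬ Odd a := by simpa [Nat.not_odd_iff_even] using ha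
    have hob : ¬ Odd b := by simpa [Nat.not_odd_iff_even] using hb
    have hab : ¬ Odd (a + b) := by
      rw [Nat.odd_iff]
      have := Nat.even_iff.mp ha; have := Nat.even_iff.mp hb; omega
    simp only [if_pos ha, if_pos hb, if_neg hoa, if_neg hob, if_neg hab]
    omega
  · have hoa : ¬ Odd a := by simpa [Nat.not_odd_iff_even] using ha
    have heb : ¬ Even b := by simpa [Nat.not_even_iff_odd] using hb
    have hab : Odd (a + b) := by
      rw [Nat.odd_iff]
      have := Nat.even_iff.mp ha; have := Nat.odd_iff.mp hb; omega
    simp only [if_pos ha, if_pos hb, if_neg hoa, if_neg heb, if_pos hab]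
    omega
  · have hea : ¬ Even a := by simpa [Nat.not_even_iff_odd] using ha
    have hob : ¬ Odd b := by simpa [Nat.not_odd_iff_even] using hb
    have hab : Odd (a + b) := by
      rw [Nat.odd_iff]
      have := Nat.odd_iff.mp ha; have := Nat.even_iff.mp hb; omega
    simp only [if_pos ha, if_pos hb, if_neg hea, if_neg hob, if_pos hab]
    omega
  · have hea : ¬ Even a := by simpa [Nat.not_even_iff_odd] using ha
    have heb : ¬ Even b := by simpa [Nat.not_even_iff_odd] using hb
    have hab : ¬ Odd (a + b) := by
      rw [Nat.odd_iff]
      have := Nat.odd_iff.mp ha; have := Nat.odd_iff.mp hb; omega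
    simp only [if_pos ha, if_pos hb, if_neg hea, if_neg heb, if_neg hab]
    omega

end SPAux

namespace SPAux
open MvPowerSeries Finset

lemma length_eraseIdx' (l : List ℕ) (m : ℕ) (hm : m < l.length) :
    (l.eraseIdx m).length = l.length - 1 := by
  rw [List.length_eraseIdx]; simp [hm]

lemma srank_step_odd (l : List ℕ) (m : ℕ) (hm : m < l.length)
    (hlen : l.length % 2 = 1) (hx : 0 < l.getD m 0) :
    srank l ≤ eps (l.getD m 0) + srank (l.eraseIdx m) := by
  have ho := countP_eraseIdx' Odd l m hm
  have he := countP_eraseIdx' Even l m hm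
  have hl := length_eraseIdx' l m hm
  unfold srank
  rw [hl]
  set x := l.getD m 0
  rcases Nat.even_or_odd x with hex | hox
  · have hno : ¬ Odd x := by simpa [Nat.not_odd_iff_even] using hex
    rw [eps_even hex hx]
    rw [if_neg hno] at ho
    rw [if_pos hex] at he
    omega
  · have hne : ¬ Even x := by simpa [Nat.not_even_iff_odd] using hox
    rw [eps_odd hox]
    rw [if_pos hox] at ho
    rw [if_neg hne] at he
    omega

lemma srank_step_even (a : ℕ) (t : List ℕ) (j : ℕ) (hj : j < t.length)
    (hlen : (t.length + 1) % 2 = 0) :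
    srank (a :: t) ≤ (if Odd (a + t.getD j 0) then 1 else 2) + srank (t.eraseIdx j) := by
  have hoA := countP_cons' Odd a t
  have heA := countP_cons' Even a t
  have ho := countP_eraseIdx' Odd t j hj
  have he := countP_eraseIdx' Even t j hj
  have hl := length_eraseIdx' t j hj
  unfold srank
  rw [hoA, heA, hl]
  simp only [List.length_cons]
  set y := t.getD j 0
  rcases Nat.even_or_odd a with ha | ha <;> rcases Nat.even_or_odd y with hy | hy
  · have hna : ¬ Odd a := by simpa [Nat.not_odd_iff_even] using ha
    have hny : ¬ Odd y := by simpa [Nat.not_odd_iff_even] using hy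
    have hay : ¬ Odd (a + y) := by
      rw [Nat.odd_iff]
      have := Nat.even_iff.mp ha; have := Nat.even_iff.mp hy; omega
    rw [if_neg hny] at ho
    rw [if_pos hy] at he
    simp only [if_pos ha, if_neg hna, if_neg hay]
    omega
  · have hna : ¬ Odd a := by simpa [Nat.not_odd_iff_even] using ha
    have hney : ¬ Even y := by simpa [Nat.not_even_iff_odd] using hy
    have hay : Odd (a + y) := by
      rw [Nat.odd_iff]
      have := Nat.even_iff.mp ha; have := Nat.odd_iff.mp hy; omega
    rw [if_pos hy] at ho
    rw [if_neg hney] at he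
    simp only [if_pos ha, if_neg hna, if_pos hay]
    omega
  · have hnea : ¬ Even a := by simpa [Nat.not_even_iff_odd] using ha
    have hny : ¬ Odd y := by simpa [Nat.not_odd_iff_even] using hy
    have hay : Odd (a + y) := by
      rw [Nat.odd_iff]
      have := Nat.odd_iff.mp ha; have := Nat.even_iff.mp hy; omega
    rw [if_neg hny] at ho
    rw [if_pos hy] at he
    simp only [if_pos ha, if_neg hnea, if_pos hay]
    omega
  · have hnea : ¬ Even a := by simpa [Nat.not_even_iff_odd] using ha
    have hney : ¬ Even y := by simpa [Nat.not_even_iff_odd] using hy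
    have hay : ¬ Odd (a + y) := by
      rw [Nat.odd_iff]
      have := Nat.odd_iff.mp ha; have := Nat.odd_iff.mp hy; omega
    rw [if_pos hy] at ho
    rw [if_neg hney] at he
    simp only [if_pos ha, if_neg hnea, if_neg hay]
    omega

end SPAux

namespace SPAux
open MvPowerSeries Finset

lemma Qmem (Q : List ℕ → MvPowerSeries ℕ ℚ)
    (hQ1 : ∀ a : ℕ, 0 < a → Q [a] = qFun a)
    (hQ2 : ∀ a b : ℕ, 0 < b → b < a →
      Q [a, b] = qFun a * qFun b +
        2 * ∑ m ∈ Finset.Icc 1 b,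
          (MvPowerSeries.C : ℚ →+* MvPowerSeries ℕ ℚ) ((-1 : ℚ) ^ m) * (qFun (a + m) * qFun (b - m)))
    (hQodd : ∀ l : List ℕ, l.Pairwise (· > ·) → (∀ x ∈ l, 0 < x) →
      Odd l.length → 3 ≤ l.length →
      Q l = ∑ i ∈ Finset.Icc 1 l.length,
        (MvPowerSeries.C : ℚ →+* MvPowerSeries ℕ ℚ) ((-1 : ℚ) ^ (i + 1)) *
          (qFun (partAt l i) * Q (l.eraseIdx (i - 1))))
    (hQeven : ∀ l : List ℕ, l.Pairwise (· > ·) → (∀ x ∈ l, 0 < x) →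
      Even l.length → 4 ≤ l.length →
      Q l = ∑ i ∈ Finset.Icc 2 l.length,
        (MvPowerSeries.C : ℚ →+* MvPowerSeries ℕ ℚ) ((-1 : ℚ) ^ i) *
          (Q [partAt l 1, partAt l i] * Q ((l.eraseIdx (i - 1)).tail))) :
    ∀ (N : ℕ) (l : List ℕ), l.length ≤ N → l ≠ [] →
      l.Pairwise (· > ·) → (∀ x ∈ l, 0 < x) → Q l ∈ M l.sum (srank l) := by
  intro N
  induction N with
  | zero =>
    intro l hlen hne _ _
    rcases l with _ | ⟨a, t⟩
    · exact absurd rfl hne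
    · simp at hlen
  | succ N ih =>
    intro l hlen hne hsort hpos
    rcases l with _ | ⟨a, _ | ⟨b, _ | ⟨c, t⟩⟩⟩
    · exact absurd rfl hne
    · -- singleton
      have ha : 0 < a := hpos a (by simp)
      rw [hQ1 a ha]
      have hsum : [a].sum = a := by simp
      rw [hsum]
      exact M_mono _ (srank_singleton_le a ha) (qFun_mem_M a)
    · -- pair
      have hb : 0 < b := hpos b (by simp)
      have hab : b < a := by
        have := (List.pairwise_cons.mp hsort).1 b (by simp)
        omega
      have hsum : [a, b].sum = a + b := by simp
      rw [hsum]
      exact M_mono _ (srank_pair_le a b) (Qpair Q hQ2 a b hb hab)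
    · -- length ≥ 3
      set l : List ℕ := a :: b :: c :: t with hldef
      have hlen3 : 3 ≤ l.length := by simp [hldef]
      rcases Nat.even_or_odd l.length with hpar | hpar
      · -- even length, ≥ 4
        have hlen4 : 4 ≤ l.length := by
          have := Nat.even_iff.mp hpar
          simp only [hldef, List.length_cons] at this ⊢
          omega
        rw [hQeven l hsort hpos hpar hlen4]
        apply Submodule.sum_mem
        intro i hi
        rw [Finset.mem_Icc] at hi
        apply C_mul_mem
        -- decompose l = a :: T
        set T : List ℕ := b :: c :: t with hTdef
        have hlT : l = a :: T := rfl
        set j : ℕ := i - 2 with hjdef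
        have hjT : j < T.length := by
          have : l.length = T.length + 1 := by rw [hlT]; simp
          omega
        set y : ℕ := T.getD j 0 with hydef
        have hymem : y ∈ T := by
          rw [hydef, List.getD_eq_getElem _ _ hjT]
          exact List.getElem_mem _
        have hymeml : y ∈ l := by rw [hlT]; exact List.mem_cons_of_mem a hymem
        have hy : 0 < y := hpos y hymeml
        have hsortaT : List.Pairwise (· > ·) (a :: T) := by rw [← hlT]; exact hsort
        have hay : y < a := (List.pairwise_cons.mp hsortaT).1 y hymem
        have hp1 : partAt l 1 = a := rfl
        have hpi : partAt l i = y := by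
          unfold partAt
          rw [hlT]
          have h1 : i - 1 = j + 1 := by omega
          rw [h1, List.getD_cons_succ]
        have herase : (l.eraseIdx (i - 1)).tail = T.eraseIdx j := by
          rw [hlT]
          have h1 : i - 1 = j + 1 := by omega
          rw [h1, List.eraseIdx_cons_succ, List.tail_cons]
        rw [hp1, hpi, herase]
        -- the remaining list
        have hsubT : (T.eraseIdx j).Sublist T := List.eraseIdx_sublist T j
        have hsortT : T.Pairwise (· > ·) := (List.pairwise_cons.mp hsortaT).2
        have hsort'' : (T.eraseIdx j).Pairwise (· > ·) := hsortT.sublist hsubT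
        have hpos'' : ∀ x ∈ T.eraseIdx j, 0 < x := fun x hx =>
          hpos x (by rw [hlT]; exact List.mem_cons_of_mem a (hsubT.subset hx))
        have hlen'' : (T.eraseIdx j).length = T.length - 1 := length_eraseIdx' T j hjT
        have hne'' : T.eraseIdx j ≠ [] := by
          intro h0
          rw [h0] at hlen''
          simp only [List.length_nil] at hlen''
          simp only [hTdef, List.length_cons] at hlen''
          omega
        have hlenle : (T.eraseIdx j).length ≤ N := by
          have h1 : l.length = T.length + 1 := by rw [hlT]; simp
          omega
        have hQ'' := ih (T.eraseIdx j) hlenle hne'' hsort'' hpos''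
        have hmul := M_mul (Qpair Q hQ2 a y hy hay) hQ''
        have hidx : (a + y) + (T.eraseIdx j).sum = l.sum := by
          have h1 := sum_eraseIdx T j hjT
          have h2 : l.sum = a + T.sum := by rw [hlT]; simp
          omega
        rw [hidx] at hmul
        refine M_mono _ ?_ hmul
        have hstep := srank_step_even a T j hjT
          (by
            have h1 : l.length = T.length + 1 := by rw [hlT]; simp
            rw [← h1]
            exact Nat.even_iff.mp hpar)
        rw [hlT]
        exact hstep
      · -- odd length
        rw [hQodd l hsort hpos hpar hlen3]
        apply Submodule.sum_mem
        intro i hi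
        rw [Finset.mem_Icc] at hi
        apply C_mul_mem
        set m : ℕ := i - 1 with hmdef
        have hm : m < l.length := by omega
        have hxeq : partAt l i = l.getD m 0 := rfl
        have hxmem : l.getD m 0 ∈ l := by
          rw [List.getD_eq_getElem _ _ hm]
          exact List.getElem_mem _
        have hx : 0 < l.getD m 0 := hpos _ hxmem
        have hsub' : (l.eraseIdx m).Sublist l := List.eraseIdx_sublist l m
        have hsort' : (l.eraseIdx m).Pairwise (· > ·) := hsort.sublist hsub'
        have hpos' : ∀ x ∈ l.eraseIdx m, 0 < x := fun x hxm => hpos x (hsub'.subset hxm)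
        have hlen' : (l.eraseIdx m).length = l.length - 1 := length_eraseIdx' l m hm
        have hne' : l.eraseIdx m ≠ [] := by
          intro h0
          rw [h0] at hlen'
          simp only [List.length_nil] at hlen'
          omega
        have hQ' := ih (l.eraseIdx m) (by omega) hne' hsort' hpos'
        have hmul := M_mul (qFun_mem_M (l.getD m 0)) hQ'
        have hidx : l.getD m 0 + (l.eraseIdx m).sum = l.sum := by
          have := sum_eraseIdx l m hm
          omega
        rw [hidx] at hmul
        rw [hxeq]
        exact M_mono _ (srank_step_odd l m hm (Nat.odd_iff.mp hpar) hx) hmul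

end SPAux

namespace SPAux
open MvPowerSeries Finset

lemma coeff_small {n : ℕ} (c : Nat.Partition n → ℚ) (r : ℕ)
    (h : (∑ π : Nat.Partition n, (MvPowerSeries.C : ℚ →+* MvPowerSeries ℕ ℚ) (c π) * pProd π) ∈ M n r) :
    ∀ π : Nat.Partition n, Multiset.card π.parts < r → c π = 0 := by
  classical
  rw [M] at h
  obtain ⟨k, f, g, hsum⟩ := Submodule.mem_span_set'.mp h
  choose S hS1 hS2 hS3 hS4 using fun i => (g i).2
  set π_ : Fin k → Nat.Partition n := fun i =>
    ⟨S i, fun {x} hx => hS2 i x hx, hS1 i⟩ with hπdef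
  set b : Nat.Partition n → ℚ := fun π => ∑ i, if π_ i = π then f i else 0 with hbdef
  have hb : ∑ π : Nat.Partition n, (MvPowerSeries.C : ℚ →+* MvPowerSeries ℕ ℚ) (b π) * pProd π
      = ∑ π : Nat.Partition n, (MvPowerSeries.C : ℚ →+* MvPowerSeries ℕ ℚ) (c π) * pProd π := by
    rw [← hsum]
    have h1 : ∀ π : Nat.Partition n, (MvPowerSeries.C : ℚ →+* MvPowerSeries ℕ ℚ) (b π) * pProd π
        = ∑ i, (if π_ i = π then f i else 0) • pProd π := by
      intro π
      rw [← smul_eq_C_mul, hbdef, Finset.sum_smul]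
    rw [Finset.sum_congr rfl (fun π _ => h1 π), Finset.sum_comm]
    refine Finset.sum_congr rfl fun i _ => ?_
    rw [Finset.sum_eq_single (π_ i)]
    · rw [if_pos rfl, pProd_eq]
      simp only [hπdef]
      rw [← hS4 i]
    · intro π _ hne
      rw [if_neg (fun h0 => hne h0.symm), zero_smul]
    · intro habs
      exact absurd (Finset.mem_univ _) habs
  have hzero : ∑ π : Nat.Partition n, (MvPowerSeries.C : ℚ →+* MvPowerSeries ℕ ℚ) (c π - b π) * pProd π = 0 := by
    have : ∀ π : Nat.Partition n, (MvPowerSeries.C : ℚ →+* MvPowerSeries ℕ ℚ) (c π - b π) * pProd π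
        = (MvPowerSeries.C : ℚ →+* MvPowerSeries ℕ ℚ) (c π) * pProd π - (MvPowerSeries.C : ℚ →+* MvPowerSeries ℕ ℚ) (b π) * pProd π := by
      intro π
      rw [map_sub, sub_mul]
    rw [Finset.sum_congr rfl (fun π _ => this π), Finset.sum_sub_distrib, hb, sub_self]
  have heq := indep _ hzero
  intro π hπ
  have hbz : b π = 0 := by
    rw [hbdef]
    refine Finset.sum_eq_zero fun i _ => ?_
    rw [if_neg]
    intro h0
    have : Multiset.card (π_ i).parts = Multiset.card π.parts := by rw [h0]
    have hcard : r ≤ Multiset.card (S i) := hS3 i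
    simp only [hπdef] at this
    omega
  have h2 := heq π
  rw [hbz, sub_zero] at h2
  exact h2

end SPAux

/-- Let `Q` satisfy Schur's inductive definition of the `Q`-functions (on strict
partitions, written as strictly decreasing lists of positive integers), and write
`Q_λ = Σ_π c_π p_π` over partitions `π` of `n`.  Since `p_π(1^t) = t^{ℓ(π)}`, the
principal specialization `Q_λ(1^t) = Σ_π c_π t^{ℓ(π)}` is a polynomial in `t` with
rational coefficients, and this polynomial is divisible by `t^{srank(λ)}` in `ℚ[t]`,
where `srank(λ) = max(o, e + (ℓ(λ) mod 2))`. -/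
theorem qschur_principal_specialization_divisible
    (Q : List ℕ → MvPowerSeries ℕ ℚ)
    (hQ1 : ∀ a : ℕ, 0 < a → Q [a] = qFun a)
    (hQ2 : ∀ a b : ℕ, 0 < b → b < a →
      Q [a, b] = qFun a * qFun b +
        2 * ∑ m ∈ Finset.Icc 1 b,
          (MvPowerSeries.C : ℚ →+* MvPowerSeries ℕ ℚ) ((-1 : ℚ) ^ m) * (qFun (a + m) * qFun (b - m)))
    (hQodd : ∀ l : List ℕ, l.Pairwise (· > ·) → (∀ x ∈ l, 0 < x) →
      Odd l.length → 3 ≤ l.length →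
      Q l = ∑ i ∈ Finset.Icc 1 l.length,
        (MvPowerSeries.C : ℚ →+* MvPowerSeries ℕ ℚ) ((-1 : ℚ) ^ (i + 1)) *
          (qFun (partAt l i) * Q (l.eraseIdx (i - 1))))
    (hQeven : ∀ l : List ℕ, l.Pairwise (· > ·) → (∀ x ∈ l, 0 < x) →
      Even l.length → 4 ≤ l.length →
      Q l = ∑ i ∈ Finset.Icc 2 l.length,
        (MvPowerSeries.C : ℚ →+* MvPowerSeries ℕ ℚ) ((-1 : ℚ) ^ i) *
          (Q [partAt l 1, partAt l i] * Q ((l.eraseIdx (i - 1)).tail)))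
    (n : ℕ) (l : List ℕ) (hl : IsStrictPartition n l)
    (c : Nat.Partition n → ℚ)
    (hc : Q l = ∑ π : Nat.Partition n, (MvPowerSeries.C : ℚ →+* MvPowerSeries ℕ ℚ) (c π) * pProd π) :
    ∃ P : Polynomial ℚ,
      Polynomial.X ^ (max (l.countP (fun x => decide (Odd x)))
          (l.countP (fun x => decide (Even x)) + l.length % 2)) ∣ P ∧
      ∀ t : ℕ, P.eval (t : ℚ) =
        ∑ π : Nat.Partition n, c π * (t : ℚ) ^ (Multiset.card π.parts) := by
  classical
  obtain ⟨hsort, hpos, hsum⟩ := hl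
  have hsmall : ∀ π : Nat.Partition n, Multiset.card π.parts < SPAux.srank l → c π = 0 := by
    rcases eq_or_ne l [] with rfl | hne
    · intro π hπ
      exfalso
      simp [SPAux.srank] at hπ
    · have hQm := SPAux.Qmem Q hQ1 hQ2 hQodd hQeven l.length l le_rfl hne hsort hpos
      rw [hsum, hc] at hQm
      exact SPAux.coeff_small c _ hQm
  refine ⟨∑ π : Nat.Partition n, Polynomial.C (c π) * Polynomial.X ^ (Multiset.card π.parts),
    ?_, ?_⟩
  · show Polynomial.X ^ SPAux.srank l ∣ _
    apply Finset.dvd_sum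
    intro π _
    by_cases hπ : Multiset.card π.parts < SPAux.srank l
    · rw [hsmall π hπ]
      simp
    · push_neg at hπ
      exact Dvd.dvd.mul_left (pow_dvd_pow _ hπ) _
  · intro t
    rw [Polynomial.eval_finset_sum]
    refine Finset.sum_congr rfl fun π _ => ?_
    rw [Polynomial.eval_mul, Polynomial.eval_pow, Polynomial.eval_C, Polynomial.eval_X]
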